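/- Let ε = ±1, τ_g = 0, and suppose ε k_n² − k_g² > 0 with θ = √(ε k_n² − k_g²). Let A = ![![0, k_g, -ε k_n], ![k_g, 0, 0], ![k_n, 0, 0]]. Then the (1,1) entry of ∫₀^ω (exp(sA) − I) ds equals (k_g² − ε k_n²)·(θω − sin(θω))/θ³, and ω + ∫₀^ω (exp(sA) − I)₁₁ ds = sin(θω)/θ. -/

import Mathlib

open Matrix

section aux
attribute [local instance] Matrix.linftyOpNormedRing Matrix.linftyOpNormedAlgebra

lemma exp_cube_formula (M : Matrix (Fin 3) (Fin 3) ℝ) (θ : ℝ) (hθ : θ ≠ 0)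
    (h3 : M * M * M = (-(θ ^ 2)) • M) (s : ℝ) :
    NormedSpace.exp (s • M) =
      (1 : Matrix (Fin 3) (Fin 3) ℝ) + (Real.sin (θ * s) / θ) • M
        + ((1 - Real.cos (θ * s)) / θ ^ 2) • (M * M) := by
  set B : ℝ → Matrix (Fin 3) (Fin 3) ℝ := fun u =>
    (1 : Matrix (Fin 3) (Fin 3) ℝ) + (Real.sin (θ * u) / θ) • M
      + ((1 - Real.cos (θ * u)) / θ ^ 2) • (M * M) with hB
  have hBderiv : ∀ u : ℝ, HasDerivAt B
      (Real.cos (θ * u) • M + (Real.sin (θ * u) / θ) • (M * M)) u := by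
    intro u
    have h1 : HasDerivAt (fun u : ℝ => Real.sin (θ * u) / θ) (Real.cos (θ * u)) u := by
      have := ((Real.hasDerivAt_sin (θ * u)).comp u
        ((hasDerivAt_id u).const_mul θ)).div_const θ
      simpa [mul_comm, mul_div_assoc, mul_div_cancel_left₀ _ hθ] using this
    have h2 : HasDerivAt (fun u : ℝ => (1 - Real.cos (θ * u)) / θ ^ 2)
        (Real.sin (θ * u) / θ) u := by
      have := (((Real.hasDerivAt_cos (θ * u)).comp u
        ((hasDerivAt_id u).const_mul θ)).const_sub 1).div_const (θ ^ 2)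
      refine this.congr_deriv ?_
      field_simp
    have := ((hasDerivAt_const u (1 : Matrix (Fin 3) (Fin 3) ℝ)).add
      (h1.smul_const M)).add (h2.smul_const (M * M))
    exact this.congr_deriv (by rw [zero_add])
  have hcomm : ∀ u : ℝ, Commute M (NormedSpace.exp (u • M)) := fun u =>
    ((Commute.refl M).smul_right u).exp_right
  have hEderiv : ∀ u : ℝ, HasDerivAt (fun u : ℝ => NormedSpace.exp ((-u) • M))
      (-(NormedSpace.exp ((-u) • M) * M)) u := by
    intro u
    have h := (hasDerivAt_exp_smul_const (𝕂 := ℝ) M (-u)).scomp u (hasDerivAt_neg u)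
    simp [Function.comp_def, neg_mul, mul_neg] at h ⊢
    exact h
  set g : ℝ → Matrix (Fin 3) (Fin 3) ℝ := fun u => NormedSpace.exp ((-u) • M) * B u with hg
  have hgderiv : ∀ u : ℝ, HasDerivAt g 0 u := by
    intro u
    have h := (hEderiv u).mul (hBderiv u)
    refine h.congr_deriv ?_
    have hMB : M * B u = Real.cos (θ * u) • M + (Real.sin (θ * u) / θ) • (M * M) := by
      simp only [hB]
      rw [mul_add, mul_add, mul_one, mul_smul_comm, mul_smul_comm, ← mul_assoc, h3]
      rw [smul_smul]
      have : (1 - Real.cos (θ * u)) / θ ^ 2 * -θ ^ 2 = -(1 - Real.cos (θ * u)) := by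
        field_simp
      rw [this]
      module
    rw [neg_mul, mul_assoc, hMB]
    simp
  have hconst : ∀ u : ℝ, g u = g 0 := by
    intro u
    have : ∀ x, deriv g x = 0 := fun x => (hgderiv x).deriv
    exact is_const_of_deriv_eq_zero (fun x => (hgderiv x).differentiableAt) this u 0
  have hg0 : g 0 = 1 := by simp [hg, hB, NormedSpace.exp_zero]
  have hinv : NormedSpace.exp (s • M) * NormedSpace.exp ((-s) • M) = 1 := by
    rw [← Matrix.exp_add_of_commute _ _ (((Commute.refl M).smul_right s).smul_left (-s)).symm]
    simp
  have := hconst s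
  rw [hg0] at this
  have this' : NormedSpace.exp ((-s) • M) * B s = 1 := this
  calc NormedSpace.exp (s • M)
      = NormedSpace.exp (s • M) * (NormedSpace.exp ((-s) • M) * B s) := by rw [this', mul_one]
    _ = (NormedSpace.exp (s • M) * NormedSpace.exp ((-s) • M)) * B s := by rw [mul_assoc]
    _ = B s := by rw [hinv, one_mul]

end aux


/-- With `τ_g = 0` and `θ = √(ε k_n² − k_g²) > 0`, for the Darboux matrix `A` one has
`∫₀^ω (exp(sA) − I)₁₁ ds = (k_g² − ε k_n²)(θω − sin θω)/θ³` and
`ω + ∫₀^ω (exp(sA) − I)₁₁ ds = sin(θω)/θ`. -/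
theorem stmt_16 (kg kn ε : ℝ) (hε : ε = 1 ∨ ε = -1)
    (hpos : 0 < ε * kn ^ 2 - kg ^ 2)
    (θ : ℝ) (hθ : θ = Real.sqrt (ε * kn ^ 2 - kg ^ 2))
    (A : Matrix (Fin 3) (Fin 3) ℝ)
    (hA : A = !![0, kg, -ε * kn; kg, 0, 0; kn, 0, 0]) (ω : ℝ) :
    (∫ s in (0:ℝ)..ω, (NormedSpace.exp (s • A) - 1) 0 0) =
        (kg ^ 2 - ε * kn ^ 2) * (θ * ω - Real.sin (θ * ω)) / θ ^ 3 ∧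
      ω + (∫ s in (0:ℝ)..ω, (NormedSpace.exp (s • A) - 1) 0 0) = Real.sin (θ * ω) / θ := by
  have hθpos : 0 < θ := hθ ▸ Real.sqrt_pos.mpr hpos
  have hθne : θ ≠ 0 := hθpos.ne'
  have hθ2 : θ ^ 2 = ε * kn ^ 2 - kg ^ 2 := by rw [hθ, Real.sq_sqrt hpos.le]
  have h3 : A * A * A = (-(θ ^ 2)) • A := by
    subst hA
    rw [Matrix.mul_fin_three, Matrix.mul_fin_three,
      Matrix.eta_fin_three ((-(θ ^ 2) : ℝ) •
        (!![0, kg, -ε * kn; kg, 0, 0; kn, 0, 0] : Matrix (Fin 3) (Fin 3) ℝ))]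
    simp only [Matrix.smul_apply, Matrix.cons_val', Matrix.cons_val_zero, Matrix.cons_val_one,
      Matrix.head_cons, Matrix.empty_val', Matrix.cons_val_fin_one, Matrix.head_fin_const,
      Matrix.cons_val_two, Matrix.tail_cons, smul_eq_mul, Matrix.of_apply]
    refine congrArg Matrix.of ?_
    refine Matrix.vec3_eq (Matrix.vec3_eq ?_ ?_ ?_) (Matrix.vec3_eq ?_ ?_ ?_)
      (Matrix.vec3_eq ?_ ?_ ?_) <;> (rw [hθ2]; ring)
  have hentry : ∀ s : ℝ, (NormedSpace.exp (s • A) - 1) 0 0 = Real.cos (θ * s) - 1 := by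
    intro s
    rw [exp_cube_formula A θ hθne h3 s]
    have hAA : (A * A) 0 0 = kg ^ 2 - ε * kn ^ 2 := by
      subst hA
      simp [Matrix.mul_apply, Fin.sum_univ_three]
      ring
    have hA00 : A 0 0 = 0 := by subst hA; simp
    simp only [Matrix.sub_apply, Matrix.add_apply, Matrix.smul_apply, Matrix.one_apply_eq,
      smul_eq_mul, hAA, hA00]
    have : kg ^ 2 - ε * kn ^ 2 = -θ ^ 2 := by rw [hθ2]; ring
    rw [this]
    field_simp
    ring
  have hint : (∫ s in (0:ℝ)..ω, (NormedSpace.exp (s • A) - 1) 0 0)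
      = Real.sin (θ * ω) / θ - ω := by
    rw [intervalIntegral.integral_congr (g := fun s => Real.cos (θ * s) - 1)
      (fun s _ => hentry s)]
    have hint1 : IntervalIntegrable (fun s : ℝ => Real.cos (θ * s))
        MeasureTheory.volume 0 ω :=
      Continuous.intervalIntegrable (by continuity) 0 ω
    rw [intervalIntegral.integral_sub hint1 intervalIntegrable_const]
    have hc : (∫ s in (0:ℝ)..ω, Real.cos (θ * s)) = Real.sin (θ * ω) / θ := by
      have hd : ∀ s : ℝ, HasDerivAt (fun u : ℝ => Real.sin (θ * u) / θ) (Real.cos (θ * s)) s := by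
        intro s
        have := ((Real.hasDerivAt_sin (θ * s)).comp s
          ((hasDerivAt_id s).const_mul θ)).div_const θ
        simpa [mul_comm, mul_div_assoc, mul_div_cancel_left₀ _ hθne] using this
      rw [intervalIntegral.integral_eq_sub_of_hasDerivAt (fun s _ => hd s)
        (Continuous.intervalIntegrable (by continuity) 0 ω)]
      simp
    rw [hc]
    simp
  constructor
  · rw [hint]
    have : kg ^ 2 - ε * kn ^ 2 = -θ ^ 2 := by rw [hθ2]; ring
    rw [this]
    field_simp
    ring
  · rw [hint]; ring
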